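/- Let d ∈ ℕ, let b_1,…,b_n ≥ 0 be real numbers, let a_1,…,a_n be nonnegative integers with Σ_{i=1}^n a_i = 2d, and let μ ∈ ℝ. Consider the homogeneous polynomial f(x) = b_1 x_1^{2d} + ⋯ + b_n x_n^{2d} − μ x_1^{a_1}⋯x_n^{a_n}. Then f is a nonnegative polynomial (f(x) ≥ 0 for all x ∈ ℝ^n) if and only if f is a sums-of-squares polynomial. -/

import Mathlib

open MvPolynomial Finset

noncomputable section

/-- `tmul A x = 𝒜 x^m`, the homogeneous form associated with an
`m`-th order `n`-dimensional tensor `A`. -/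
def tmul {m n : ℕ} (A : (Fin m → Fin n) → ℝ) (x : Fin n → ℝ) : ℝ :=
  ∑ g : Fin m → Fin n, A g * ∏ j, x (g j)

/-- A tensor is symmetric if its entries are invariant under permutations of the indices. -/
def IsSymT {m n : ℕ} (A : (Fin m → Fin n) → ℝ) : Prop :=
  ∀ (σ : Equiv.Perm (Fin m)) (g : Fin m → Fin n), A (g ∘ σ) = A g

/-- `lam` is an H-eigenvalue of a tensor of order `m + 1`:
there is a nonzero `x` with `𝒜 x^m = lam * x^{[m]}`. -/
def IsHEig {m n : ℕ} (A : (Fin (m + 1) → Fin n) → ℝ) (lam : ℝ) : Prop :=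
  ∃ x : Fin n → ℝ, x ≠ 0 ∧ ∀ i : Fin n,
    (∑ g : Fin m → Fin n, A (Fin.cons i g) * ∏ j, x (g j)) = lam * x i ^ m

/-- `𝒜_Γ x_Γ^m` for a subtensor `B` indexed by an index set `Γ ⊆ {1,…,n}`. -/
def subTmul {m n : ℕ} (Γ : Finset (Fin n)) (B : (Fin m → Γ) → ℝ) (x : Fin n → ℝ) : ℝ :=
  ∑ g : Fin m → Γ, B g * ∏ j, x (g j).1

/-- An index tuple is off-diagonal if not all of its entries coincide. -/
def NotDiag {m : ℕ} {I : Type*} (g : Fin m → I) : Prop := ¬ ∀ j j' : Fin m, g j = g j'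

/-- Condition (iii) in the definition of a W-tensor, for one subtensor. -/
def WCondIII {m n : ℕ} {Γ : Finset (Fin n)} (B : (Fin m → Γ) → ℝ) : Prop :=
  (∃ gb : Fin m → Γ, NotDiag gb ∧ ∀ g : Fin m → Γ, NotDiag g →
      (∀ σ : Equiv.Perm (Fin m), g ≠ gb ∘ σ) → B g = 0) ∨
  (∀ g : Fin m → Γ, NotDiag g → 0 ≤ B g)

/-- Condition (i) in the definition of a W-tensor. -/
def WCondI {n s : ℕ} (Γ : Fin s → Finset (Fin n)) : Prop :=
  ∀ p : Fin s, 0 < (p : ℕ) →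
    (((Finset.univ.filter fun l => l < p).biUnion Γ) ∩ Γ p).card ≤ 1

/-- W-tensor. -/
def IsWTensor {m n : ℕ} (A : (Fin m → Fin n) → ℝ) : Prop :=
  ∃ (s : ℕ) (Γ : Fin s → Finset (Fin n)) (B : ∀ l : Fin s, (Fin m → Γ l) → ℝ),
    0 < s ∧ s ≤ n ∧
    Function.Injective Γ ∧
    Finset.univ.biUnion Γ = Finset.univ ∧
    WCondI Γ ∧
    (∀ x : Fin n → ℝ, tmul A x = ∑ l, subTmul (Γ l) (B l) x) ∧
    (∀ l, WCondIII (B l))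

/-- Sums of squares of polynomials. -/
def IsSOSPoly {σ : Type*} (p : MvPolynomial σ ℝ) : Prop :=
  ∃ (r : ℕ) (q : Fin r → MvPolynomial σ ℝ), p = ∑ j, q j ^ 2

/-- The polynomial `𝒜 x^m` as a formal multivariate polynomial. -/
def tpoly {m n : ℕ} (A : (Fin m → Fin n) → ℝ) : MvPolynomial (Fin n) ℝ :=
  ∑ g : Fin m → Fin n, MvPolynomial.C (A g) * ∏ j, MvPolynomial.X (g j)

/-- The polynomial `𝒜_Γ x_Γ^m` of a subtensor, in the variables `x_Γ`. -/
def subTpoly {m n : ℕ} (Γ : Finset (Fin n)) (B : (Fin m → Γ) → ℝ) : MvPolynomial Γ ℝ :=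
  ∑ g : Fin m → Γ, MvPolynomial.C (B g) * ∏ j, MvPolynomial.X (g j)

/-- A (symmetric) tensor is copositive if `𝒜 x^m ≥ 0` for all entrywise-nonnegative `x`. -/
def Copositive {m n : ℕ} (A : (Fin m → Fin n) → ℝ) : Prop :=
  ∀ x : Fin n → ℝ, (∀ i, 0 ≤ x i) → 0 ≤ tmul A x



section SOSAux


variable {R : Type*} [CommRing R]

lemma IsSumSq.mul_sq {S : R} (h : IsSumSq S) (a : R) : IsSumSq (a * a * S) := by
  induction h with
  | zero => simpa using IsSumSq.zero
  | @sq_add b T hT ih =>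
    have : a * a * (b * b + T) = (a*b) * (a*b) + a * a * T := by ring
    rw [this]; exact IsSumSq.sq_add _ ih

lemma IsSumSq.of_sq (a : R) : IsSumSq (a ^ 2) := by
  simpa [sq] using IsSumSq.sq_add a 0 IsSumSq.zero

lemma IsSumSq.sum' {ι : Type*} (s : Finset ι) (f : ι → R) (h : ∀ i ∈ s, IsSumSq (f i)) :
    IsSumSq (∑ i ∈ s, f i) := by
  induction s using Finset.cons_induction with
  | empty => simpa using IsSumSq.zero
  | cons i s his ih =>
    rw [Finset.sum_cons]
    exact (h i (Finset.mem_cons_self i s)).add (ih fun j hj => h j (Finset.mem_cons.2 (Or.inr hj)))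

lemma IsSumSq.map {R' : Type*} [CommRing R'] (φ : R →+* R') {S : R} (h : IsSumSq S) :
    IsSumSq (φ S) := by
  induction h with
  | zero => simpa using IsSumSq.zero
  | @sq_add a T hT ih => rw [map_add, map_mul]; exact IsSumSq.sq_add _ ih


variable {R : Type*} [CommRing R]

lemma sq_pow_comm (α : R) (s : ℕ) : (α^2)^s = (α^s)^2 := by
  rw [← pow_mul, ← pow_mul, mul_comm]

lemma bin_aux (α β : R) (p q : ℕ) :
    (p:R) * (α^2)^(p+q) + (q:R) * (β^2)^(p+q) - ((p+q):R) * ((α^2)^p * (β^2)^q)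
    = ∑ s ∈ range p, ∑ i ∈ range q,
        (α^2)^s * (β^2)^(q-1-i) *
          ((∑ t ∈ range (p+i-s), (α^2)^t * (β^2)^(p+i-s-1-t)) * ((α^2)-(β^2))^2) := by
  set u := (α^2 : R) with hu
  set v := (β^2 : R) with hv
  have hterm : ∀ s ∈ range p, ∀ i ∈ range q,
      u^s * v^(q-1-i) * ((∑ t ∈ range (p+i-s), u^t * v^(p+i-s-1-t)) * (u-v)^2)
      = (u^(p+i) * v^(q-1-i) - u^s * v^(p+q-1-s)) * (u - v) := by
    intro s hs i hi
    simp only [mem_range] at hs hi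
    have h1 : (∑ t ∈ range (p+i-s), u^t * v^(p+i-s-1-t)) * (u - v) = u^(p+i-s) - v^(p+i-s) :=
      geom_sum₂_mul u v (p+i-s)
    have e1 : s + (p+i-s) = p+i := by omega
    have e2 : (q-1-i) + (p+i-s) = p+q-1-s := by omega
    calc u^s * v^(q-1-i) * ((∑ t ∈ range (p+i-s), u^t * v^(p+i-s-1-t)) * (u-v)^2)
        = u^s * v^(q-1-i) * (((∑ t ∈ range (p+i-s), u^t * v^(p+i-s-1-t)) * (u-v)) * (u-v)) := by
          ring
      _ = u^s * v^(q-1-i) * ((u^(p+i-s) - v^(p+i-s)) * (u-v)) := by rw [h1]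
      _ = (u^s * u^(p+i-s) * v^(q-1-i) - u^s * (v^(q-1-i) * v^(p+i-s))) * (u-v) := by ring
      _ = (u^(p+i) * v^(q-1-i) - u^s * v^(p+q-1-s)) * (u - v) := by
          rw [← pow_add, ← pow_add, e1, e2]
  rw [Finset.sum_congr rfl (fun s hs => Finset.sum_congr rfl (fun i hi => hterm s hs i hi))]
  have hA : ∑ i ∈ range q, u^(p+i) * v^(q-1-i) * (u-v) = u^p * (u^q - v^q) := by
    rw [← geom_sum₂_mul u v q, Finset.sum_mul, Finset.mul_sum]
    refine Finset.sum_congr rfl (fun i hi => ?_)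
    rw [pow_add]; ring
  have hB : ∑ s ∈ range p, u^s * v^(p+q-1-s) * (u-v) = v^q * (u^p - v^p) := by
    rw [← geom_sum₂_mul u v p, Finset.sum_mul, Finset.mul_sum]
    refine Finset.sum_congr rfl (fun s hs => ?_)
    simp only [mem_range] at hs
    have e : p+q-1-s = (p-1-s) + q := by omega
    rw [e, pow_add]; ring
  have expand : ∑ s ∈ range p, ∑ i ∈ range q,
      (u^(p+i) * v^(q-1-i) - u^s * v^(p+q-1-s)) * (u - v)
      = (p:R) * (u^p * (u^q - v^q)) - (q:R) * (v^q * (u^p - v^p)) := by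
    rw [← hA, ← hB]
    simp only [sub_mul, Finset.sum_sub_distrib, Finset.sum_const, card_range, nsmul_eq_mul,
      Finset.mul_sum, Finset.sum_mul]
  rw [expand]
  ring

lemma bin_sumSq (α β : R) (p q : ℕ) :
    IsSumSq ((p:R) * (α^2)^(p+q) + (q:R) * (β^2)^(p+q) - ((p+q):R) * ((α^2)^p * (β^2)^q)) := by
  rw [bin_aux]
  refine IsSumSq.sum' _ _ (fun s _ => IsSumSq.sum' _ _ (fun i _ => ?_))
  have h1 : IsSumSq ((α^2:R)^s) := by rw [sq_pow_comm]; exact IsSumSq.of_sq _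
  have h2 : IsSumSq ((β^2:R)^(q-1-i)) := by rw [sq_pow_comm]; exact IsSumSq.of_sq _
  have hG : IsSumSq (∑ t ∈ range (p+i-s), (α^2:R)^t * (β^2)^(p+i-s-1-t)) := by
    refine IsSumSq.sum' _ _ (fun t _ => ?_)
    rw [sq_pow_comm, sq_pow_comm, ← mul_pow]
    exact IsSumSq.of_sq _
  exact (h1.mul h2).mul (hG.mul (IsSumSq.of_sq _))


variable {ι : Type*} [DecidableEq ι]

lemma fill_exists (s : Finset ι) (c : ι → ℕ) (T : ℕ) (hT : T ≤ ∑ i ∈ s, c i) :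
    ∃ w : ι → ℕ, (∀ i, w i ≤ c i) ∧ (∀ i ∉ s, w i = 0) ∧ ∑ i ∈ s, w i = T := by
  induction s using Finset.cons_induction generalizing T with
  | empty =>
    simp only [Finset.sum_empty] at hT
    refine ⟨fun _ => 0, fun i => Nat.zero_le _, fun i _ => rfl, by simp only [Finset.sum_const_zero]; omega⟩
  | cons a s ha ih =>
    rw [Finset.sum_cons] at hT
    set t := min (c a) T with hts
    obtain ⟨w', hw'le, hw'z, hw's⟩ := ih (T - t) (by omega)
    refine ⟨Function.update w' a t, ?_, ?_, ?_⟩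
    · intro i
      rcases eq_or_ne i a with rfl | h
      · simp [Function.update_self]; omega
      · simpa [Function.update_of_ne h] using hw'le i
    · intro i hi
      have hia : i ≠ a := by rintro rfl; exact hi (Finset.mem_cons_self _ _)
      have : i ∉ s := fun hmem => hi (Finset.mem_cons.2 (Or.inr hmem))
      simp [Function.update_of_ne hia, hw'z i this]
    · rw [Finset.sum_cons, Function.update_self]
      have : ∑ i ∈ s, Function.update w' a t i = ∑ i ∈ s, w' i := by
        refine Finset.sum_congr rfl (fun i hi => ?_)
        have : i ≠ a := by rintro rfl; exact ha hi
        simp [Function.update_of_ne this]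
      rw [this, hw's]; omega

variable [Fintype ι]

lemma split_exists (v : ι → ℕ)
    (hcard : 3 ≤ (univ.filter (fun i => v i ≠ 0)).card) :
    ∃ w w' : ι → ℕ, (∀ i, w i + w' i = 2 * v i) ∧
      (∑ i, w i = ∑ i, v i) ∧ (∑ i, w' i = ∑ i, v i) ∧
      (univ.filter (fun i => w i ≠ 0)).card < (univ.filter (fun i => v i ≠ 0)).card ∧
      (univ.filter (fun i => w' i ≠ 0)).card < (univ.filter (fun i => v i ≠ 0)).card := by
  classical
  set D := ∑ i, v i with hD
  set s : Finset ι := univ.filter (fun i => v i ≠ 0) with hs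
  have hsum_s : ∑ i ∈ s, v i = D := by
    rw [hs, hD]
    exact Finset.sum_filter_ne_zero _
  -- at least two elements of s satisfy 2 * v i ≤ D
  set t : Finset ι := s.filter (fun i => 2 * v i ≤ D) with ht
  have htcard : 2 ≤ t.card := by
    by_contra hlt
    push_neg at hlt
    have h2 : 2 ≤ (s \ t).card := by
      have : (s \ t).card ≥ s.card - t.card := le_card_sdiff t s
      omega
    obtain ⟨a, ha, b, hb, hab⟩ := Finset.one_lt_card.1 (by omega : 1 < (s \ t).card)
    have haD : ¬ (2 * v a ≤ D) := by
      have := (Finset.mem_sdiff.1 ha).2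
      simpa [ht, Finset.mem_filter, (Finset.mem_sdiff.1 ha).1] using this
    have hbD : ¬ (2 * v b ≤ D) := by
      have := (Finset.mem_sdiff.1 hb).2
      simpa [ht, Finset.mem_filter, (Finset.mem_sdiff.1 hb).1] using this
    have hle : v a + v b ≤ D := by
      have h1 : ∑ i ∈ ({a, b} : Finset ι), v i ≤ ∑ i, v i :=
        Finset.sum_le_sum_of_subset (Finset.subset_univ _)
      rwa [Finset.sum_pair hab] at h1
    omega
  obtain ⟨j, hj, l, hl, hjl⟩ := Finset.one_lt_card.1 (by omega : 1 < t.card)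
  have hjs : j ∈ s := (Finset.mem_filter.1 hj).1
  have hls : l ∈ s := (Finset.mem_filter.1 hl).1
  have hjD : 2 * v j ≤ D := (Finset.mem_filter.1 hj).2
  have hlD : 2 * v l ≤ D := (Finset.mem_filter.1 hl).2
  set s' : Finset ι := (s.erase j).erase l with hs'
  have hsub : s' ⊆ s := (Finset.erase_subset _ _).trans (Finset.erase_subset _ _)
  have hvjl : v j + v l ≤ D := by
    have h1 : ∑ i ∈ ({j, l} : Finset ι), v i ≤ ∑ i, v i :=
      Finset.sum_le_sum_of_subset (Finset.subset_univ _)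
    rw [Finset.sum_pair (fun h => hjl h)] at h1
    omega
  have hsum_s' : ∑ i ∈ s', 2 * v i = 2 * D - 2 * v j - 2 * v l := by
    have h1 : ∑ i ∈ s.erase j, v i = D - v j := by
      have := Finset.add_sum_erase s v hjs
      omega
    have h2 : ∑ i ∈ s', v i = D - v j - v l := by
      have hlmem : l ∈ s.erase j := Finset.mem_erase.2 ⟨fun h => hjl h.symm, hls⟩
      have h3 := Finset.add_sum_erase (s.erase j) v hlmem
      rw [← hs'] at h3
      omega
    rw [← Finset.mul_sum, h2]
    omega
  obtain ⟨w₀, hw₀le, hw₀z, hw₀s⟩ := fill_exists s' (fun m => 2 * v m) (D - 2 * v l)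
    (by rw [hsum_s']; omega)
  set w : ι → ℕ := fun m => if m = l then 2 * v l else w₀ m with hw
  have hwle : ∀ i, w i ≤ 2 * v i := by
    intro i; rw [hw]; rcases eq_or_ne i l with rfl | h
    · simp
    · simpa [h] using hw₀le i
  set w' : ι → ℕ := fun m => 2 * v m - w m with hw'
  have hadd : ∀ i, w i + w' i = 2 * v i := fun i => by
    have := hwle i; simp only [hw']; omega
  have hw₀univ : ∑ i, w₀ i = D - 2 * v l := by
    rw [← hw₀s]
    exact (Finset.sum_subset (Finset.subset_univ _)
      (fun x _ hx => hw₀z x hx)).symm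
  have hsumw : ∑ i, w i = D := by
    have hl' : l ∈ (univ : Finset ι) := Finset.mem_univ l
    rw [← Finset.add_sum_erase _ w hl']
    have : ∑ i ∈ univ.erase l, w i = ∑ i ∈ univ.erase l, w₀ i := by
      refine Finset.sum_congr rfl (fun i hi => ?_)
      have : i ≠ l := (Finset.mem_erase.1 hi).1
      simp [hw, this]
    rw [this]
    have hw₀l : w₀ l = 0 := hw₀z l (by simp [hs', Finset.mem_erase])
    have : ∑ i ∈ univ.erase l, w₀ i = D - 2 * v l := by
      have := Finset.add_sum_erase (univ : Finset ι) w₀ (Finset.mem_univ l)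
      omega
    have hwl : w l = 2 * v l := by simp [hw]
    rw [this, hwl]
    omega
  have hsumw' : ∑ i, w' i = D := by
    have h1 : ∑ i, (w i + w' i) = ∑ i, 2 * v i := Finset.sum_congr rfl (fun i _ => hadd i)
    rw [Finset.sum_add_distrib, ← Finset.mul_sum] at h1
    omega
  have hsupp_w : (univ.filter (fun i => w i ≠ 0)).card < s.card := by
    have hss : univ.filter (fun i => w i ≠ 0) ⊆ s.erase j := by
      intro m hm
      simp only [Finset.mem_filter, Finset.mem_univ, true_and] at hm
      rcases eq_or_ne m l with rfl | hml
      · exact Finset.mem_erase.2 ⟨fun h => hjl h.symm, hls⟩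
      · have hm0 : w₀ m ≠ 0 := by simpa [hw, hml] using hm
        have hms' : m ∈ s' := by
          by_contra hns; exact hm0 (hw₀z m hns)
        refine Finset.mem_erase.2 ⟨?_, hsub hms'⟩
        intro h; subst h
        exact (Finset.mem_erase.1 (Finset.mem_erase.1 hms').2).1 rfl
    calc (univ.filter (fun i => w i ≠ 0)).card ≤ (s.erase j).card := Finset.card_le_card hss
      _ < s.card := Finset.card_erase_lt_of_mem hjs
  have hsupp_w' : (univ.filter (fun i => w' i ≠ 0)).card < s.card := by
    have hss : univ.filter (fun i => w' i ≠ 0) ⊆ s.erase l := by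
      intro m hm
      simp only [Finset.mem_filter, Finset.mem_univ, true_and] at hm
      have hml : m ≠ l := by
        rintro rfl
        apply hm
        simp [hw', hw]
      have hvm : v m ≠ 0 := by
        intro h0
        apply hm
        have := hwle m
        simp only [hw']
        omega
      exact Finset.mem_erase.2 ⟨hml, by simp [hs, hvm]⟩
    calc (univ.filter (fun i => w' i ≠ 0)).card ≤ (s.erase l).card := Finset.card_le_card hss
      _ < s.card := Finset.card_erase_lt_of_mem hls
  exact ⟨w, w', hadd, hsumw, hsumw', hsupp_w, hsupp_w'⟩


variable {σ : Type*} [Fintype σ] [DecidableEq σ]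

local notation "R'" => MvPolynomial σ ℝ


lemma key_id (e : ℝ) (N : ℕ) (c w w' : σ → ℕ) (hadd : ∀ i, w i + w' i = c i) :
    (C (2:ℝ) : R') * ((∑ i, C ((c i : ℕ):ℝ) * X i ^ N) - C e * ∏ i, X i ^ c i)
    = ((∑ i, C ((2 * w i : ℕ):ℝ) * X i ^ N) - C e * ∏ i, X i ^ (2 * w i))
      + ((∑ i, C ((2 * w' i : ℕ):ℝ) * X i ^ N) - C e * ∏ i, X i ^ (2 * w' i))
      + C e * (∏ i, X i ^ w i - ∏ i, X i ^ w' i)^2 := by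
  have hMsqw : (∏ i, (X i : R')^(2 * w i)) = (∏ i, (X i : R') ^ w i)^2 := by
    rw [← Finset.prod_pow]
    exact Finset.prod_congr rfl fun i _ => by rw [mul_comm 2 (w i), pow_mul]
  have hMsqw' : (∏ i, (X i : R')^(2 * w' i)) = (∏ i, (X i : R') ^ w' i)^2 := by
    rw [← Finset.prod_pow]
    exact Finset.prod_congr rfl fun i _ => by rw [mul_comm 2 (w' i), pow_mul]
  have hMmul : (∏ i, (X i : R')^(c i)) = (∏ i, (X i : R') ^ w i) * (∏ i, (X i : R') ^ w' i) := by
    rw [← Finset.prod_mul_distrib]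
    exact Finset.prod_congr rfl fun i _ => by rw [← pow_add, hadd i]
  have hsum : (∑ i, (C ((2 * w i:ℕ):ℝ) : R') * X i ^ N) + ∑ i, (C ((2 * w' i:ℕ):ℝ) : R') * X i ^ N
      = C 2 * ∑ i, (C ((c i:ℕ):ℝ) : R') * X i ^ N := by
    rw [Finset.mul_sum, ← Finset.sum_add_distrib]
    refine Finset.sum_congr rfl fun i _ => ?_
    have h : ((2 * w i : ℕ):ℝ) + ((2 * w' i : ℕ):ℝ) = 2 * ((c i : ℕ):ℝ) := by
      rw [← hadd i]; push_cast; ring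
    rw [← add_mul, ← map_add, h, ← mul_assoc, ← map_mul]
  have hC2 : (C (2:ℝ) : R') = 2 := map_ofNat C 2
  rw [hC2] at hsum ⊢
  linear_combination (-1 : R') * hsum - 2 * C e * hMmul + C e * hMsqw + C e * hMsqw'

lemma CmulSumSq {σ : Type*} {r : ℝ} (hr : 0 ≤ r) {S : MvPolynomial σ ℝ} (h : IsSumSq S) :
    IsSumSq ((C r : MvPolynomial σ ℝ) * S) := by
  have hc : (C r : MvPolynomial σ ℝ) = (C (Real.sqrt r))^2 := by
    rw [← map_pow, Real.sq_sqrt hr]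
  rw [hc]
  exact (IsSumSq.of_sq _).mul h
section Core
variable {σ : Type*} [Fintype σ] [DecidableEq σ]



lemma Q_sos (d : ℕ) (k : ℕ) : ∀ (v : σ → ℕ), (univ.filter (fun i => v i ≠ 0)).card ≤ k →
    ∑ i, v i = d →
    IsSumSq ((∑ i, (C ((2 * v i : ℕ):ℝ) : MvPolynomial σ ℝ) * X i ^ (2 * d))
      - C ((2*d:ℕ):ℝ) * ∏ i, X i ^ (2 * v i)) := by
  induction k with
  | zero =>
    intro v hc hs
    have hz : ∀ i, v i = 0 := by
      intro i
      by_contra h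
      have hmem : i ∈ univ.filter (fun i => v i ≠ 0) := by simp [h]
      have := Finset.card_pos.2 ⟨i, hmem⟩
      omega
    have hd : d = 0 := by rw [← hs]; simp [hz]
    simpa [hz, hd] using (IsSumSq.zero : IsSumSq (0 : MvPolynomial σ ℝ))
  | succ k ih =>
    intro v hc hs
    rcases Nat.lt_or_ge ((univ.filter (fun i => v i ≠ 0)).card) (k+1) with hlt | hge
    · exact ih v (by omega) hs
    have hcard : (univ.filter (fun i => v i ≠ 0)).card = k + 1 := le_antisymm hc hge
    rcases Nat.lt_or_ge (k+1) 3 with hk2 | hk3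
    · -- card = 1 or 2
      rcases Nat.lt_or_ge (k+1) 2 with hk1 | hk2'
      · -- card = 1
        have h1 : (univ.filter (fun i => v i ≠ 0)).card = 1 := by omega
        obtain ⟨j, hj⟩ := Finset.card_eq_one.1 h1
        have hvz : ∀ i, i ≠ j → v i = 0 := by
          intro i hij
          by_contra h
          have hmem : i ∈ univ.filter (fun i => v i ≠ 0) := by simp [h]
          rw [hj, Finset.mem_singleton] at hmem
          exact hij hmem
        have hdj : v j = d := by
          rw [← hs]
          exact (Finset.sum_eq_single j (fun i _ hij => hvz i hij) (fun h => (h (mem_univ j)).elim)).symm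
        have hsum1 : (∑ i, (C ((2 * v i : ℕ):ℝ) : MvPolynomial σ ℝ) * X i ^ (2 * d))
            = C ((2*d:ℕ):ℝ) * X j ^ (2*d) := by
          rw [Finset.sum_eq_single j (fun i _ hij => by simp [hvz i hij])
            (fun h => (h (mem_univ j)).elim), hdj]
        have hprod1 : (∏ i, (X i : MvPolynomial σ ℝ) ^ (2 * v i)) = X j ^ (2 * d) := by
          rw [Finset.prod_eq_single j (fun i _ hij => by simp [hvz i hij])
            (fun h => (h (mem_univ j)).elim), hdj]
        rw [hsum1, hprod1, sub_self]
        exact IsSumSq.zero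
      · -- card = 2
        have h2 : (univ.filter (fun i => v i ≠ 0)).card = 2 := by omega
        obtain ⟨j, l, hjl, hset⟩ := Finset.card_eq_two.1 h2
        have hvz : ∀ i, i ≠ j → i ≠ l → v i = 0 := by
          intro i hij hil
          by_contra h
          have hmem : i ∈ univ.filter (fun i => v i ≠ 0) := by simp [h]
          rw [hset] at hmem
          simp only [Finset.mem_insert, Finset.mem_singleton] at hmem
          tauto
        have hd2 : v j + v l = d := by
          rw [← hs]
          rw [← Finset.sum_subset (Finset.subset_univ ({j, l} : Finset σ))
            (fun x _ hx => by
              simp only [Finset.mem_insert, Finset.mem_singleton] at hx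
              push_neg at hx
              exact hvz x hx.1 hx.2)]
          rw [Finset.sum_pair hjl]
        have hsum2 : (∑ i, (C ((2 * v i : ℕ):ℝ) : MvPolynomial σ ℝ) * X i ^ (2 * d))
            = C ((2 * v j:ℕ):ℝ) * X j ^ (2*d) + C ((2 * v l:ℕ):ℝ) * X l ^ (2*d) := by
          rw [← Finset.sum_subset (Finset.subset_univ ({j, l} : Finset σ))
            (fun x _ hx => by
              simp only [Finset.mem_insert, Finset.mem_singleton] at hx
              push_neg at hx
              simp [hvz x hx.1 hx.2])]
          rw [Finset.sum_pair hjl]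
        have hprod2 : (∏ i, (X i : MvPolynomial σ ℝ) ^ (2 * v i))
            = X j ^ (2 * v j) * X l ^ (2 * v l) := by
          rw [← Finset.prod_subset (Finset.subset_univ ({j, l} : Finset σ))
            (fun x _ hx => by
              simp only [Finset.mem_insert, Finset.mem_singleton] at hx
              push_neg at hx
              simp [hvz x hx.1 hx.2])]
          rw [Finset.prod_pair hjl]
        rw [hsum2, hprod2]
        have hbin := bin_sumSq (X j : MvPolynomial σ ℝ) (X l) (v j) (v l)
        have h2' : IsSumSq ((C (2:ℝ) : MvPolynomial σ ℝ) *
            (((v j:ℕ):MvPolynomial σ ℝ) * ((X j^2))^(v j + v l) + ((v l:ℕ):MvPolynomial σ ℝ) * ((X l^2))^(v j + v l)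
              - ((((v j:ℕ)):MvPolynomial σ ℝ) + (((v l:ℕ)):MvPolynomial σ ℝ)) * ((X j^2)^(v j) * (X l^2)^(v l)))) :=
          CmulSumSq (by norm_num) (by push_cast; push_cast at hbin; exact hbin)
        have heq : C ((2 * v j:ℕ):ℝ) * (X j : MvPolynomial σ ℝ) ^ (2*d) + C ((2 * v l:ℕ):ℝ) * X l ^ (2*d)
            - C ((2*d:ℕ):ℝ) * (X j ^ (2 * v j) * X l ^ (2 * v l))
            = (C (2:ℝ) : MvPolynomial σ ℝ) *
            (((v j:ℕ):MvPolynomial σ ℝ) * ((X j^2))^(v j + v l) + ((v l:ℕ):MvPolynomial σ ℝ) * ((X l^2))^(v j + v l)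
              - ((((v j:ℕ)):MvPolynomial σ ℝ) + (((v l:ℕ)):MvPolynomial σ ℝ)) * ((X j^2)^(v j) * (X l^2)^(v l))) := by
          rw [← hd2]
          rw [show (C ((2 * v j:ℕ):ℝ) : MvPolynomial σ ℝ) = ((2 * v j : ℕ) : MvPolynomial σ ℝ) from C_eq_coe_nat _,
              show (C ((2 * v l:ℕ):ℝ) : MvPolynomial σ ℝ) = ((2 * v l : ℕ) : MvPolynomial σ ℝ) from C_eq_coe_nat _,
              show (C ((2 * (v j + v l):ℕ):ℝ) : MvPolynomial σ ℝ) = ((2 * (v j + v l) : ℕ) : MvPolynomial σ ℝ) from C_eq_coe_nat _,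
              show (C (2:ℝ) : MvPolynomial σ ℝ) = (2 : MvPolynomial σ ℝ) from map_ofNat C 2]
          push_cast
          ring
        rw [heq]
        exact h2'
    · -- card ≥ 3 : split
      obtain ⟨w, w', hadd, hsw, hsw', hcw, hcw'⟩ := split_exists v (by omega)
      have hkey := key_id (σ := σ) ((2*d:ℕ):ℝ) (2*d) (fun i => 2 * v i) w w' hadd
      have hw : IsSumSq ((∑ i, (C ((2 * w i : ℕ):ℝ) : MvPolynomial σ ℝ) * X i ^ (2 * d))
          - C ((2*d:ℕ):ℝ) * ∏ i, X i ^ (2 * w i)) := ih w (by omega) (by rw [hsw, hs])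
      have hw' : IsSumSq ((∑ i, (C ((2 * w' i : ℕ):ℝ) : MvPolynomial σ ℝ) * X i ^ (2 * d))
          - C ((2*d:ℕ):ℝ) * ∏ i, X i ^ (2 * w' i)) := ih w' (by omega) (by rw [hsw', hs])
      have hsq : IsSumSq ((C ((2*d:ℕ):ℝ) : MvPolynomial σ ℝ) *
          (∏ i, X i ^ w i - ∏ i, X i ^ w' i)^2) :=
        CmulSumSq (by positivity) (IsSumSq.of_sq _)
      have hrhs := (hw.add hw').add hsq
      have hfin : (∑ i, (C ((2 * v i : ℕ):ℝ) : MvPolynomial σ ℝ) * X i ^ (2 * d))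
          - C ((2*d:ℕ):ℝ) * ∏ i, X i ^ (2 * v i)
          = C (1/2 : ℝ) * ((((∑ i, (C ((2 * w i : ℕ):ℝ) : MvPolynomial σ ℝ) * X i ^ (2 * d))
              - C ((2*d:ℕ):ℝ) * ∏ i, X i ^ (2 * w i))
            + ((∑ i, (C ((2 * w' i : ℕ):ℝ) : MvPolynomial σ ℝ) * X i ^ (2 * d))
              - C ((2*d:ℕ):ℝ) * ∏ i, X i ^ (2 * w' i)))
            + C ((2*d:ℕ):ℝ) * (∏ i, X i ^ w i - ∏ i, X i ^ w' i)^2) := by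
        rw [← hkey, ← mul_assoc, ← map_mul]
        norm_num
      rw [hfin]
      exact CmulSumSq (by norm_num) hrhs

lemma core_sos (c : σ → ℕ) (d : ℕ) (hs : ∑ i, c i = 2 * d) :
    IsSumSq ((∑ i, (C ((c i : ℕ):ℝ) : MvPolynomial σ ℝ) * X i ^ (2*d))
      - C ((2*d:ℕ):ℝ) * ∏ i, X i ^ c i) := by
  obtain ⟨v, hvle, hvz, hvs⟩ := fill_exists univ c d (by omega)
  set v' : σ → ℕ := fun i => c i - v i with hv'
  have hadd : ∀ i, v i + v' i = c i := fun i => by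
    have := hvle i; simp only [hv']; omega
  have hsv' : ∑ i, v' i = d := by
    have h1 : ∑ i, (v i + v' i) = ∑ i, c i := Finset.sum_congr rfl (fun i _ => hadd i)
    rw [Finset.sum_add_distrib] at h1
    omega
  have hkey := key_id (σ := σ) ((2*d:ℕ):ℝ) (2*d) c v v' hadd
  have hv := Q_sos d ((univ.filter (fun i => v i ≠ 0)).card) v le_rfl hvs
  have hv2 := Q_sos d ((univ.filter (fun i => v' i ≠ 0)).card) v' le_rfl hsv'
  have hsq : IsSumSq ((C ((2*d:ℕ):ℝ) : MvPolynomial σ ℝ) *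
      (∏ i, X i ^ v i - ∏ i, X i ^ v' i)^2) :=
    CmulSumSq (by positivity) (IsSumSq.of_sq _)
  have hrhs := (hv.add hv2).add hsq
  have hfin : (∑ i, (C ((c i : ℕ):ℝ) : MvPolynomial σ ℝ) * X i ^ (2*d))
      - C ((2*d:ℕ):ℝ) * ∏ i, X i ^ c i
      = C (1/2 : ℝ) * ((((∑ i, (C ((2 * v i : ℕ):ℝ) : MvPolynomial σ ℝ) * X i ^ (2 * d))
          - C ((2*d:ℕ):ℝ) * ∏ i, X i ^ (2 * v i))
        + ((∑ i, (C ((2 * v' i : ℕ):ℝ) : MvPolynomial σ ℝ) * X i ^ (2 * d))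
          - C ((2*d:ℕ):ℝ) * ∏ i, X i ^ (2 * v' i)))
        + C ((2*d:ℕ):ℝ) * (∏ i, X i ^ v i - ∏ i, X i ^ v' i)^2) := by
    rw [← hkey, ← mul_assoc, ← map_mul]
    norm_num
  rw [hfin]
  exact CmulSumSq (by norm_num) hrhs

end Core


section Conv
variable {σ : Type*}

lemma isSOS_of_isSumSq {p : MvPolynomial σ ℝ} (h : IsSumSq p) : IsSOSPoly p := by
  induction h with
  | zero => exact ⟨0, fun _ => 0, by simp⟩
  | @sq_add a S hS ih =>
    obtain ⟨r, q, rfl⟩ := ih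
    refine ⟨r+1, Fin.cons a q, ?_⟩
    rw [Fin.sum_univ_succ]
    simp [Fin.cons_zero, Fin.cons_succ, sq]

lemma isSumSq_of_isSOS {p : MvPolynomial σ ℝ} (h : IsSOSPoly p) : IsSumSq p := by
  obtain ⟨r, q, rfl⟩ := h
  have key : ∀ s : Finset (Fin r), IsSumSq (∑ j ∈ s, q j ^ 2) := by
    intro s
    induction s using Finset.cons_induction with
    | empty => simpa using IsSumSq.zero
    | cons i s his ih =>
      rw [Finset.sum_cons]
      exact (by simpa [sq] using IsSumSq.sq_add (q i) 0 IsSumSq.zero : IsSumSq ((q i)^2)).add ih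
  exact key univ

lemma eval_nonneg_of_isSOS {p : MvPolynomial σ ℝ} (h : IsSOSPoly p) (x : σ → ℝ) :
    0 ≤ eval x p := by
  obtain ⟨r, q, rfl⟩ := h
  rw [map_sum]
  exact Finset.sum_nonneg fun j _ => by rw [map_pow]; positivity

end Conv


lemma IsSumSq_C {σ : Type*} {r : ℝ} (hr : 0 ≤ r) : IsSumSq (C r : MvPolynomial σ ℝ) := by
  have h1 : IsSumSq (1 : MvPolynomial σ ℝ) := by
    have := IsSumSq.sq_add (1 : MvPolynomial σ ℝ) IsSumSq.zero
    simpa using this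
  simpa using CmulSumSq hr h1



end SOSAux

set_option maxHeartbeats 1000000 in
/-- Lemma 3.1 (Fidalgo–Kovacec): for `b_i ≥ 0`, `a_i ∈ ℕ` with `∑ a_i = 2d`, the polynomial
`f = ∑ b_i x_i^{2d} − μ x_1^{a_1}⋯x_n^{a_n}` is nonnegative iff it is a sum of squares. -/
theorem lemma31 (n d : ℕ) (b : Fin n → ℝ) (hb : ∀ i, 0 ≤ b i)
    (a : Fin n → ℕ) (ha : ∑ i, a i = 2 * d) (μ : ℝ) :
    (∀ x : Fin n → ℝ, 0 ≤ MvPolynomial.eval x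
        ((∑ i, MvPolynomial.C (b i) * MvPolynomial.X i ^ (2 * d))
          - MvPolynomial.C μ * ∏ i, MvPolynomial.X i ^ (a i))) ↔
    IsSOSPoly ((∑ i, MvPolynomial.C (b i) * MvPolynomial.X i ^ (2 * d))
          - MvPolynomial.C μ * ∏ i, MvPolynomial.X i ^ (a i)) := by
  constructor
  · intro h
    -- forward direction
    rcases Nat.eq_zero_or_pos d with hd0 | hdpos
    · -- d = 0
      subst hd0
      have haz : ∀ i, a i = 0 := by
        intro i
        have := (by simpa using ha : ∀ i, a i = 0) i
        exact this
      have hf : ((∑ i, C (b i) * X i ^ (2 * 0)) - C μ * ∏ i, X i ^ (a i) : MvPolynomial (Fin n) ℝ)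
          = C ((∑ i, b i) - μ) := by
        simp [haz, map_sub, map_sum]
      rw [hf]
      rw [hf] at h
      have h0 := h 0
      simp only [eval_C] at h0
      exact isSOS_of_isSumSq (IsSumSq_C h0)
    · -- d ≥ 1
      by_cases hμ0 : μ = 0
      · subst hμ0
        refine isSOS_of_isSumSq ?_
        have : ((∑ i, C (b i) * X i ^ (2 * d)) - C (0:ℝ) * ∏ i, X i ^ (a i) : MvPolynomial (Fin n) ℝ)
            = ∑ i, C (b i) * X i ^ (2 * d) := by simp
        rw [this]
        refine IsSumSq.sum' _ _ (fun i _ => ?_)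
        have hX : (X i : MvPolynomial (Fin n) ℝ) ^ (2 * d) = (X i ^ d)^2 := by
          rw [mul_comm, pow_mul]
        rw [hX]
        exact CmulSumSq (hb i) (IsSumSq.of_sq _)
      · by_cases hall : (∀ i, Even (a i)) ∧ μ < 0
        · obtain ⟨hev, hneg⟩ := hall
          refine isSOS_of_isSumSq ?_
          have hm : ((∏ i, X i ^ (a i / 2) : MvPolynomial (Fin n) ℝ))^2 = ∏ i, X i ^ (a i) := by
            rw [← Finset.prod_pow]
            refine Finset.prod_congr rfl (fun i _ => ?_)
            rw [← pow_mul]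
            congr 1
            obtain ⟨r, hr⟩ := hev i
            omega
          have hf : ((∑ i, C (b i) * X i ^ (2 * d)) - C μ * ∏ i, X i ^ (a i) : MvPolynomial (Fin n) ℝ)
              = (∑ i, C (b i) * X i ^ (2 * d)) + C (-μ) * (∏ i, X i ^ (a i / 2))^2 := by
            rw [hm, map_neg]
            ring
          rw [hf]
          refine IsSumSq.add ?_ (CmulSumSq (by linarith) (IsSumSq.of_sq _))
          refine IsSumSq.sum' _ _ (fun i _ => ?_)
          rw [show (X i : MvPolynomial (Fin n) ℝ) ^ (2 * d) = (X i ^ d)^2 by rw [mul_comm, pow_mul]]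
          exact CmulSumSq (hb i) (IsSumSq.of_sq _)
        · -- main case
          refine isSOS_of_isSumSq ?_
          have heval : ∀ y : Fin n → ℝ,
              eval y ((∑ i, C (b i) * X i ^ (2 * d)) - C μ * ∏ i, X i ^ (a i) : MvPolynomial (Fin n) ℝ)
              = (∑ i, b i * y i ^ (2*d)) - μ * ∏ i, y i ^ a i := by
            intro y
            simp only [map_sub, map_sum, map_mul, map_pow, map_prod, eval_C, eval_X]
          have hcase : 0 < μ ∨ (μ < 0 ∧ ∃ j, ¬ Even (a j)) := by
            rcases lt_trichotomy μ 0 with hlt | h0 | hgt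
            · right
              refine ⟨hlt, ?_⟩
              by_contra hno
              push_neg at hno
              exact hall ⟨hno, hlt⟩
            · exact absurd h0 hμ0
            · left; exact hgt
          obtain ⟨s, hs1, hsprod⟩ : ∃ s : Fin n → ℝ, (∀ i, s i = 1 ∨ s i = -1) ∧
              0 < μ * ∏ i, s i ^ a i := by
            rcases hcase with hpos | ⟨hneg, j, hodd⟩
            · exact ⟨fun _ => 1, fun _ => Or.inl rfl, by simpa using hpos⟩
            · refine ⟨fun i => if i = j then -1 else 1,
                fun i => by by_cases hij : i = j <;> simp [hij], ?_⟩
              have hp : (∏ i, (if i = j then (-1:ℝ) else 1) ^ a i) = (-1:ℝ)^(a j) := by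
                rw [Finset.prod_eq_single j (fun i _ hij => by simp [hij])
                  (fun hmm => (hmm (mem_univ j)).elim)]
                simp
              rw [hp, (Nat.not_even_iff_odd.1 hodd).neg_one_pow, mul_neg_one]
              exact neg_pos.2 hneg
          have hs2 : ∀ i, (s i)^2 = 1 := fun i => by rcases hs1 i with hh | hh <;> rw [hh] <;> norm_num
          have hs2d : ∀ i, (s i)^(2*d) = 1 := fun i => by rw [pow_mul, hs2, one_pow]
          have hbpos : ∀ i, a i ≠ 0 → 0 < b i := by
            intro i hai
            rcases (hb i).lt_or_eq with hlt | heq0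
            · exact hlt
            exfalso
            have hbi : b i = 0 := heq0.symm
            set E := μ * ∏ m, s m ^ a m with hE
            set B := ∑ m, b m with hB
            set R := max 1 ((B + 1) / E) with hR
            have hR1 : (1:ℝ) ≤ R := le_max_left _ _
            have hRE : B + 1 ≤ E * R ^ a i := by
              have h1 : R ≤ R ^ a i := le_self_pow₀ hR1 hai
              have h2 : (B+1)/E ≤ R := le_max_right _ _
              calc B + 1 = E * ((B+1)/E) := by field_simp
                _ ≤ E * R := by nlinarith [hsprod]
                _ ≤ E * R ^ a i := by nlinarith [hsprod]
            set y : Fin n → ℝ := fun m => if m = i then s i * R else s m with hy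
            have hsum_y : ∑ m, b m * y m ^ (2*d) = B := by
              rw [hB]
              refine Finset.sum_congr rfl fun m _ => ?_
              rcases eq_or_ne m i with rfl | hmi
              · rw [hbi]; ring
              · simp only [hy, if_neg hmi]
                rw [hs2d m, mul_one]
            have hprod_y : ∏ m, y m ^ a m = R ^ a i * ∏ m, s m ^ a m := by
              rw [← Finset.mul_prod_erase univ (fun m => y m ^ a m) (mem_univ i),
                  ← Finset.mul_prod_erase univ (fun m => s m ^ a m) (mem_univ i)]
              have hyi : y i = s i * R := by simp [hy]
              have hrest : ∏ m ∈ univ.erase i, y m ^ a m = ∏ m ∈ univ.erase i, s m ^ a m :=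
                Finset.prod_congr rfl fun m hm => by
                  have hmi : m ≠ i := (Finset.mem_erase.1 hm).1
                  simp [hy, hmi]
              rw [hyi, hrest, mul_pow]
              ring
            have h0 := h y
            rw [heval y, hsum_y, hprod_y] at h0
            rw [hE] at hRE
            have : μ * (R ^ a i * ∏ m, s m ^ a m) = (μ * ∏ m, s m ^ a m) * R ^ a i := by ring
            rw [this] at h0
            linarith
          set c : Fin n → ℝ := fun i => if a i = 0 then 1
            else s i * (b i / a i) ^ (((2*d:ℕ):ℝ))⁻¹ with hc
          have h2dne : ((2*d:ℕ):ℝ) ≠ 0 := Nat.cast_ne_zero.2 (by omega)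
          have h2dpos : (0:ℝ) < ((2*d:ℕ):ℝ) := Nat.cast_pos.2 (by omega)
          have hcabs : ∀ i, a i ≠ 0 → 0 < b i / (a i:ℝ) := fun i hai =>
            div_pos (hbpos i hai) (Nat.cast_pos.2 (Nat.pos_of_ne_zero hai))
          have hcpow : ∀ i, a i ≠ 0 → c i ^ (2*d) = b i / a i := by
            intro i hai
            have hba : (0:ℝ) ≤ b i / a i := le_of_lt (hcabs i hai)
            simp only [hc, if_neg hai]
            rw [mul_pow, hs2d i, one_mul]
            rw [← Real.rpow_natCast ((b i / (a i:ℝ)) ^ (((2*d:ℕ):ℝ))⁻¹) (2*d),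
                ← Real.rpow_mul hba, inv_mul_cancel₀ h2dne, Real.rpow_one]
          have hcne : ∀ i, c i ≠ 0 := by
            intro i
            by_cases hai : a i = 0
            · simp [hc, hai]
            · simp only [hc, if_neg hai]
              have hpow := Real.rpow_pos_of_pos (hcabs i hai) (((2*d:ℕ):ℝ))⁻¹
              rcases hs1 i with hh | hh <;> rw [hh]
              · simpa using ne_of_gt hpow
              · simp only [neg_mul, one_mul, ne_eq, neg_eq_zero]
                exact ne_of_gt hpow
          set Pc := ∏ i, c i ^ a i with hPc
          have hPcne : Pc ≠ 0 := Finset.prod_ne_zero_iff.2 fun i _ => pow_ne_zero _ (hcne i)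
          have hQpos : 0 < μ * Pc := by
            have hPc2 : Pc = (∏ i, s i ^ a i) *
                ∏ i, ((if a i = 0 then (1:ℝ) else (b i / a i) ^ (((2*d:ℕ):ℝ))⁻¹)) ^ a i := by
              rw [← Finset.prod_mul_distrib]
              refine Finset.prod_congr rfl fun i _ => ?_
              by_cases hai : a i = 0 <;> simp [hc, hai, mul_pow]
            have hρ : 0 < ∏ i, ((if a i = 0 then (1:ℝ)
                else (b i / a i) ^ (((2*d:ℕ):ℝ))⁻¹)) ^ a i := by
              refine Finset.prod_pos fun i _ => pow_pos ?_ _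
              by_cases hai : a i = 0
              · simp [hai]
              · simp only [if_neg hai]
                exact Real.rpow_pos_of_pos (hcabs i hai) _
            rw [hPc2, ← mul_assoc]
            exact mul_pos hsprod hρ
          set t := μ / (((2*d:ℕ):ℝ) * Pc) with ht
          have htpos : 0 < t := by
            have heqt : t = (μ * Pc) / (((2*d:ℕ):ℝ) * Pc^2) := by
              rw [ht]; field_simp
            rw [heqt]
            exact div_pos hQpos (mul_pos h2dpos (pow_two_pos_of_ne_zero hPcne))
          set xs : Fin n → ℝ := fun i => if a i = 0 then 0 else (c i)⁻¹ with hxs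
          have hev1 : ∑ i, b i * xs i ^ (2*d) = ((2*d:ℕ):ℝ) := by
            have hterm : ∀ i ∈ univ, b i * xs i ^(2*d) = ((a i:ℕ):ℝ) := by
              intro i _
              by_cases hai : a i = 0
              · simp [hxs, hai, zero_pow (by omega : 2*d ≠ 0)]
              · simp only [hxs, if_neg hai]
                rw [inv_pow, hcpow i hai]
                field_simp [ne_of_gt (hbpos i hai)]
            rw [Finset.sum_congr rfl hterm, ← Nat.cast_sum, ha]
          have hev2 : ∏ i, xs i ^ a i = Pc⁻¹ := by
            rw [hPc, ← Finset.prod_inv_distrib]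
            refine Finset.prod_congr rfl fun i _ => ?_
            by_cases hai : a i = 0
            · simp [hxs, hai]
            · simp [hxs, hai, inv_pow]
          have hle1 : μ / Pc ≤ ((2*d:ℕ):ℝ) := by
            have h0 := h xs
            rw [heval xs, hev1, hev2] at h0
            rw [div_eq_mul_inv]
            linarith
          have ht1 : t ≤ 1 := by
            have heqt : t = (μ / Pc) / ((2*d:ℕ):ℝ) := by
              rw [ht, div_div, mul_comm]
            rw [heqt]
            exact (div_le_one h2dpos).2 hle1
          have hcore := core_sos a d ha
          have hφsos : IsSumSq ((aeval (fun i => (C (c i) * X i : MvPolynomial (Fin n) ℝ)))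
              ((∑ i, C ((a i:ℕ):ℝ) * X i ^ (2*d)) - C ((2*d:ℕ):ℝ) * ∏ i, X i ^ a i)) :=
            IsSumSq.map (aeval (fun i => (C (c i) * X i : MvPolynomial (Fin n) ℝ))).toRingHom hcore
          have hφeq : (aeval (fun i => (C (c i) * X i : MvPolynomial (Fin n) ℝ)))
              ((∑ i, C ((a i:ℕ):ℝ) * X i ^ (2*d)) - C ((2*d:ℕ):ℝ) * ∏ i, X i ^ a i)
              = (∑ i, C ((a i:ℝ) * c i ^(2*d)) * X i ^ (2*d))
                - C (((2*d:ℕ):ℝ) * Pc) * ∏ i, X i ^ a i := by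
            rw [map_sub, map_sum, map_mul]
            congr 1
            · refine Finset.sum_congr rfl fun i _ => ?_
              rw [map_mul, map_pow, aeval_C, aeval_X, mul_pow, ← map_pow, MvPolynomial.algebraMap_eq,
                ← mul_assoc, ← map_mul]
            · rw [map_prod, aeval_C, MvPolynomial.algebraMap_eq]
              have hthis : ∏ i, (aeval (fun m => (C (c m) * X m : MvPolynomial (Fin n) ℝ)))
                    ((X i : MvPolynomial (Fin n) ℝ) ^ a i)
                  = C Pc * ∏ i, (X i : MvPolynomial (Fin n) ℝ) ^ a i := by
                rw [hPc]
                have e1 : ∀ i ∈ univ, (aeval (fun m => (C (c m) * X m : MvPolynomial (Fin n) ℝ)))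
                      ((X i : MvPolynomial (Fin n) ℝ) ^ a i)
                    = C (c i ^ a i) * (X i : MvPolynomial (Fin n) ℝ) ^ a i := fun i _ => by
                  rw [map_pow, aeval_X, mul_pow, ← map_pow]
                rw [Finset.prod_congr rfl e1, Finset.prod_mul_distrib, ← map_prod]
              rw [hthis, ← mul_assoc, ← map_mul]
          have hfin : ((∑ i, C (b i) * X i ^ (2 * d)) - C μ * ∏ i, X i ^ (a i) : MvPolynomial (Fin n) ℝ)
              = (∑ i, C (b i - t * ((a i:ℝ) * c i ^(2*d))) * X i ^ (2*d))
                + C t * ((∑ i, C ((a i:ℝ) * c i ^(2*d)) * X i ^ (2*d))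
                  - C (((2*d:ℕ):ℝ) * Pc) * ∏ i, X i ^ a i) := by
            have hμt : t * (((2*d:ℕ):ℝ) * Pc) = μ := by
              rw [ht]
              field_simp
            rw [mul_sub, Finset.mul_sum]
            have e1 : ∀ i ∈ univ, (C t : MvPolynomial (Fin n) ℝ) * (C ((a i:ℝ) * c i ^(2*d)) * X i ^ (2*d))
                = C (t * ((a i:ℝ) * c i ^(2*d))) * X i ^(2*d) := fun i _ => by
              rw [← mul_assoc, ← map_mul]
            rw [Finset.sum_congr rfl e1, ← mul_assoc, ← map_mul, hμt]
            have e2 : (∑ i, (C (b i - t * ((a i:ℝ) * c i ^(2*d))) : MvPolynomial (Fin n) ℝ) * X i ^ (2*d))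
                + ∑ i, (C (t * ((a i:ℝ) * c i ^(2*d))) : MvPolynomial (Fin n) ℝ) * X i ^(2*d)
                = ∑ i, (C (b i) : MvPolynomial (Fin n) ℝ) * X i ^ (2*d) := by
              rw [← Finset.sum_add_distrib]
              refine Finset.sum_congr rfl fun i _ => ?_
              rw [← add_mul, ← map_add, sub_add_cancel]
            rw [← e2]
            ring
          rw [hfin]
          refine IsSumSq.add ?_ (CmulSumSq htpos.le (by rw [← hφeq]; exact hφsos))
          refine IsSumSq.sum' _ _ fun i _ => ?_
          have hri : 0 ≤ b i - t * ((a i:ℝ) * c i ^(2*d)) := by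
            by_cases hai : a i = 0
            · simp only [hai, Nat.cast_zero, zero_mul, mul_zero, sub_zero]
              exact hb i
            · rw [hcpow i hai]
              have hac : (a i:ℝ) * (b i / a i) = b i := by
                field_simp
              rw [hac]
              nlinarith [hbpos i hai]
          rw [show (X i : MvPolynomial (Fin n) ℝ) ^ (2 * d) = (X i ^ d)^2 from by rw [mul_comm, pow_mul]]
          exact CmulSumSq hri (IsSumSq.of_sq _)
  · intro h x
    exact eval_nonneg_of_isSOS h x


end
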